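/- Let X be a set of boolean variables, 𝒞 a collection of clauses over X, c ∈ 𝒞 a clause containing the positive literal x. Let h ∉ X be a new variable, and let 𝒞' be obtained from 𝒞 by replacing the literal x in c by the positive literal h and adding the new clause {x, ¬h}. Then 𝒞 is satisfiable if and only if 𝒞' is satisfiable (as a collection of clauses over X ∪ {h}). -/
import Mathlib


/-- A literal is a pair (variable, polarity); a truth assignment t satisfies a clause
(a finite set of literals) if some literal (x, b) in it has t x = b. -/
def SatisfiesClause {V : Type*} (t : V → Bool) (c : Finset (V × Bool)) : Prop :=
  ∃ l ∈ c, t l.1 = l.2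

/-- Splitting a variable: replacing the positive literal x in a clause c by a fresh
variable h and adding the clause {x, ¬h} preserves satisfiability. -/
theorem split_variable_satisfiable {V : Type*} [DecidableEq V]
    (𝒞 : Set (Finset (V × Bool))) (c : Finset (V × Bool)) (hc : c ∈ 𝒞)
    (x h : V) (hx : (x, true) ∈ c) (hxh : h ≠ x)
    (hfresh : ∀ d ∈ 𝒞, ∀ b : Bool, (h, b) ∉ d) :
    (∃ t : V → Bool, ∀ d ∈ 𝒞, SatisfiesClause t d) ↔
      (∃ t : V → Bool, ∀ d ∈
          insert ({(x, true), (h, false)} : Finset (V × Bool))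
            (insert (insert (h, true) (c.erase (x, true))) (𝒞 \ {c})),
        SatisfiesClause t d) := by
  constructor
  · rintro ⟨t, ht⟩
    refine ⟨fun v => if v = h then t x else t v, ?_⟩
    intro d hd
    rcases hd with rfl | rfl | hd
    · by_cases hxt : t x = true
      · exact ⟨(x, true), by simp, by simp [hxh.symm, hxt]⟩
      · exact ⟨(h, false), by simp, by simp [Bool.not_eq_true] at hxt; simp [hxt]⟩
    · obtain ⟨l, hl, hlt⟩ := ht c hc
      by_cases hlx : l = (x, true)
      · refine ⟨(h, true), Finset.mem_insert_self _ _, ?_⟩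
        subst hlx; simp [hlt]
      · refine ⟨l, Finset.mem_insert_of_mem (Finset.mem_erase.2 ⟨hlx, hl⟩), ?_⟩
        have : l.1 ≠ h := fun he => hfresh c hc l.2 (by rw [← he]; exact hl)
        simp [this, hlt]
    · obtain ⟨l, hl, hlt⟩ := ht d hd.1
      have : l.1 ≠ h := fun he => hfresh d hd.1 l.2 (by rw [← he]; exact hl)
      exact ⟨l, hl, by simp [this, hlt]⟩
  · rintro ⟨t, ht⟩
    refine ⟨t, fun d hd => ?_⟩
    by_cases hdc : d = c
    · subst hdc
      obtain ⟨l, hl, hlt⟩ := ht _ (Set.mem_insert_of_mem _ (Set.mem_insert _ _))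
      rcases Finset.mem_insert.1 hl with rfl | hl
      · -- t h = true, use clause {(x,true),(h,false)}
        obtain ⟨m, hm, hmt⟩ := ht _ (Set.mem_insert _ _)
        simp only [Finset.mem_insert, Finset.mem_singleton] at hm
        rcases hm with rfl | rfl
        · exact ⟨(x, true), hx, hmt⟩
        · simp at hlt; rw [hlt] at hmt; simp at hmt
      · exact ⟨l, Finset.mem_of_mem_erase hl, hlt⟩
    · exact ht d (Set.mem_insert_of_mem _ (Set.mem_insert_of_mem _ ⟨hd, hdc⟩))
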